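/- Let 0 ≤ a < b ≤ 1, let f : ℝ → ℝ be a nonnegative integrable function with ∫_a^b f(ξ) dξ = 1, and let F(x) = ∫_a^x f(ξ) dξ. Let T ∈ ℕ, T ≥ 1, let u_1,…,u_T ∈ (a,b), v ∈ (a,b), and let ω_1 ≥ ω_2 ≥ … ≥ ω_T ≥ 0. Define m_1 = a and m_j = max{a, u_1,…,u_{j−1}} for j ≥ 2. Then ∫_a^b ( 1 − max_{j=1,…,T}( ω_j 𝟙_{u_j > ξ} ) ) ( 1 − 𝟙_{v > ξ} ) f(ξ) dξ = 1 − F(v) − Σ_{j : u_j > m_j} ω_j ( F(u_j) − F(m_j) + F(min{m_j, v}) − F(min{u_j, v}) ). -/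

import Mathlib

open MeasureTheory

private lemma aux_indicator_integral {a b c d : ℝ} (f : ℝ → ℝ)
    (hf_int : IntervalIntegrable f volume a b) (hab : a ≤ b)
    (hac : a ≤ c) (hcd : c ≤ d) (hdb : d ≤ b)
    (s : Set ℝ) (h1 : Set.Ioo c d ⊆ s) (h2 : s ⊆ Set.Icc c d) :
    (∫ ξ in a..b, s.indicator f ξ) = (∫ ξ in a..d, f ξ) - ∫ ξ in a..c, f ξ := by
  have hnull : (volume : Measure ℝ) {c, d} = 0 :=
    ((Set.finite_singleton d).insert c).measure_zero volume
  have hae : ∀ᵐ (x : ℝ), x ∈ Set.uIoc a b → s.indicator f x = (Set.Ioc c d).indicator f x := by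
    refine (measure_eq_zero_iff_ae_notMem.mp hnull).mono fun x hx _ => ?_
    simp only [Set.mem_insert_iff, Set.mem_singleton_iff, not_or] at hx
    by_cases hxs : x ∈ s
    · have hxIcc := h2 hxs
      have hx2 : x ∈ Set.Ioc c d := ⟨lt_of_le_of_ne hxIcc.1 (Ne.symm hx.1), hxIcc.2⟩
      rw [Set.indicator_of_mem hxs, Set.indicator_of_mem hx2]
    · have hx2 : x ∉ Set.Ioc c d := by
        intro h
        exact hxs (h1 ⟨h.1, lt_of_le_of_ne h.2 hx.2⟩)
      rw [Set.indicator_of_notMem hxs, Set.indicator_of_notMem hx2]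
  rw [intervalIntegral.integral_congr_ae hae,
    intervalIntegral.integral_of_le hab, setIntegral_indicator measurableSet_Ioc,
    Set.inter_eq_right.mpr (Set.Ioc_subset_Ioc hac hdb),
    ← intervalIntegral.integral_of_le hcd]
  have hid : IntervalIntegrable f volume a d :=
    hf_int.mono_set (Set.uIcc_subset_uIcc_iff_le.mpr
      (by simp [min_eq_left, hab, le_trans hac hcd, hdb, le_refl]))
  have hic : IntervalIntegrable f volume a c :=
    hf_int.mono_set (Set.uIcc_subset_uIcc_iff_le.mpr
      (by simp [hab, hac, le_trans hcd hdb, le_refl]))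
  exact (intervalIntegral.integral_interval_sub_left hid hic).symm

/-- Per-sample integral identity for the value-weighted weight function with
`g = g_max`: with `m_j = max{a, u_1, …, u_{j-1}}`,
`∫_a^b (1 - max_j ω_j 𝟙_{u_j > ξ})(1 - 𝟙_{v > ξ}) f(ξ) dξ
= 1 - F(v) - ∑_{j : u_j > m_j} ω_j (F(u_j) - F(m_j) + F(min{m_j,v}) - F(min{u_j,v}))`. -/
theorem stmt17 (a b : ℝ) (ha : 0 ≤ a) (hab : a < b) (hb : b ≤ 1)
    (f : ℝ → ℝ) (hf_nonneg : ∀ x, 0 ≤ f x)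
    (hf_int : IntervalIntegrable f volume a b)
    (hf_one : (∫ ξ in a..b, f ξ) = 1)
    (F : ℝ → ℝ) (hF : ∀ x, F x = ∫ ξ in a..x, f ξ)
    (T : ℕ) (hT : 1 ≤ T)
    (u : ℕ → ℝ) (hu : ∀ j ∈ Finset.Icc 1 T, u j ∈ Set.Ioo a b)
    (v : ℝ) (hv : v ∈ Set.Ioo a b)
    (ω : ℕ → ℝ) (hω_nonneg : ∀ j ∈ Finset.Icc 1 T, 0 ≤ ω j)
    (hω_mono : ∀ j, 1 ≤ j → j + 1 ≤ T → ω (j + 1) ≤ ω j)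
    (m : ℕ → ℝ) (hm : ∀ j, m j = (Finset.Icc 1 (j - 1)).fold max a u) :
    (∫ ξ in a..b,
        (1 - (Finset.Icc 1 T).sup' (Finset.nonempty_Icc.mpr hT)
            (fun j => ω j * (if ξ < u j then (1 : ℝ) else 0))) *
          (1 - (if ξ < v then (1 : ℝ) else 0)) * f ξ)
      = 1 - F v - ∑ j ∈ (Finset.Icc 1 T).filter (fun j => m j < u j),
          ω j * (F (u j) - F (m j) + F (min (m j) v) - F (min (u j) v)) := by
  set S := (Finset.Icc 1 T).filter (fun j => m j < u j) with hS
  -- extended monotonicity of ω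
  have hanti : ∀ i j, 1 ≤ i → i ≤ j → j ≤ T → ω j ≤ ω i := by
    intro i j h1 hij hjT
    induction j, hij using Nat.le_induction with
    | base => exact le_rfl
    | succ j hij ih =>
      exact le_trans (hω_mono j (le_trans h1 hij) hjT) (ih (Nat.le_of_succ_le hjT))
  -- pointwise identity for the sup'
  have key : ∀ ξ : ℝ, a ≤ ξ →
      (Finset.Icc 1 T).sup' (Finset.nonempty_Icc.mpr hT)
          (fun j => ω j * (if ξ < u j then (1 : ℝ) else 0))
        = ∑ j ∈ S, ω j * (if m j ≤ ξ ∧ ξ < u j then (1 : ℝ) else 0) := by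
    intro ξ hξ
    set Q := (Finset.Icc 1 T).filter (fun j => ξ < u j) with hQ
    by_cases hQne : Q.Nonempty
    · set j0 := Q.min' hQne with hj0
      have hj0Q : j0 ∈ Q := Q.min'_mem hQne
      have hj0Icc : j0 ∈ Finset.Icc 1 T := (Finset.mem_filter.mp hj0Q).1
      have hj0lt : ξ < u j0 := (Finset.mem_filter.mp hj0Q).2
      have hj0min : ∀ k ∈ Q, j0 ≤ k := fun k hk => Q.min'_le k hk
      have hj0T := Finset.mem_Icc.mp hj0Icc
      -- m j0 ≤ ξ
      have hmle : m j0 ≤ ξ := by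
        rw [hm j0]
        refine (Finset.fold_max_le ξ).mpr ⟨hξ, fun k hk => ?_⟩
        have hk' := Finset.mem_Icc.mp hk
        have hkT : k ∈ Finset.Icc 1 T := Finset.mem_Icc.mpr
          ⟨hk'.1, le_trans hk'.2 (le_trans (Nat.sub_le _ _) hj0T.2)⟩
        by_contra hcon
        have hkQ : k ∈ Q := Finset.mem_filter.mpr ⟨hkT, lt_of_not_ge hcon⟩
        have := hj0min k hkQ
        omega
      have hj0S : j0 ∈ S := Finset.mem_filter.mpr ⟨hj0Icc, lt_of_le_of_lt hmle hj0lt⟩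
      have hsum : (∑ j ∈ S, ω j * (if m j ≤ ξ ∧ ξ < u j then (1 : ℝ) else 0)) = ω j0 := by
        rw [Finset.sum_eq_single j0]
        · simp [hmle, hj0lt]
        · intro j hjS hne
          have hjIcc := (Finset.mem_filter.mp hjS).1
          have hjT := Finset.mem_Icc.mp hjIcc
          rcases Classical.em (m j ≤ ξ ∧ ξ < u j) with h | h
          · exfalso
            have hjQ : j ∈ Q := Finset.mem_filter.mpr ⟨hjIcc, h.2⟩
            have hle : j0 ≤ j := hj0min j hjQ
            have hlt : j0 < j := lt_of_le_of_ne hle (fun h' => hne h'.symm)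
            have hmem : j0 ∈ Finset.Icc 1 (j - 1) := Finset.mem_Icc.mpr ⟨hj0T.1, by omega⟩
            have : u j0 ≤ m j := by
              rw [hm j]
              exact (Finset.le_fold_max _).mpr (Or.inr ⟨j0, hmem, le_rfl⟩)
            have := lt_of_le_of_lt (le_trans this h.1) hj0lt
            exact lt_irrefl _ this
          · simp [h]
        · intro h; exact absurd hj0S h
      rw [hsum]
      apply le_antisymm
      · apply Finset.sup'_le
        intro j hj
        have hjT := Finset.mem_Icc.mp hj
        by_cases hju : ξ < u j
        · have hjQ : j ∈ Q := Finset.mem_filter.mpr ⟨hj, hju⟩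
          simp only [hju, if_true, mul_one]
          exact hanti j0 j hj0T.1 (hj0min j hjQ) hjT.2
        · simp only [hju, if_false, mul_zero]
          exact hω_nonneg j0 hj0Icc
      · have := Finset.le_sup' (fun j => ω j * (if ξ < u j then (1 : ℝ) else 0)) hj0Icc
        simpa only [hj0lt, if_true, mul_one] using this
    · -- no j with ξ < u j : both sides are 0
      have hz : ∀ j ∈ Finset.Icc 1 T, ¬ ξ < u j := by
        intro j hj hcon
        exact hQne ⟨j, Finset.mem_filter.mpr ⟨hj, hcon⟩⟩
      have hl : (Finset.Icc 1 T).sup' (Finset.nonempty_Icc.mpr hT)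
          (fun j => ω j * (if ξ < u j then (1 : ℝ) else 0)) = 0 := by
        apply le_antisymm
        · apply Finset.sup'_le
          intro j hj
          simp [hz j hj]
        · have h1T : 1 ∈ Finset.Icc 1 T := Finset.mem_Icc.mpr ⟨le_rfl, hT⟩
          have := Finset.le_sup' (fun j => ω j * (if ξ < u j then (1 : ℝ) else 0)) h1T
          simpa only [hz 1 h1T, if_false, mul_zero] using this
      rw [hl]
      symm
      apply Finset.sum_eq_zero
      intro j hjS
      have hjIcc := (Finset.mem_filter.mp hjS).1
      simp [hz j hjIcc]
  -- the integrand rewritten as a linear combination of indicators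
  have hEqOn : Set.EqOn
      (fun ξ => (1 - (Finset.Icc 1 T).sup' (Finset.nonempty_Icc.mpr hT)
            (fun j => ω j * (if ξ < u j then (1 : ℝ) else 0))) *
          (1 - (if ξ < v then (1 : ℝ) else 0)) * f ξ)
      (fun ξ => (Set.Icc v b).indicator f ξ
        - ∑ j ∈ S, ω j * (Set.Ico (max (m j) v) (max (u j) v)).indicator f ξ)
      (Set.uIcc a b) := by
    intro ξ hξ
    rw [Set.uIcc_of_le hab.le] at hξ
    simp only
    rw [key ξ hξ.1]
    have hfirst : (1 - (if ξ < v then (1 : ℝ) else 0)) * f ξ = (Set.Icc v b).indicator f ξ := by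
      by_cases hxv : ξ < v
      · rw [Set.indicator_of_notMem (by simp [Set.mem_Icc]; intro h; linarith)]
        simp [hxv]
      · rw [Set.indicator_of_mem (Set.mem_Icc.mpr ⟨le_of_not_gt hxv, hξ.2⟩)]
        simp [hxv]
    have hterm : ∀ j, (ω j * (if m j ≤ ξ ∧ ξ < u j then (1 : ℝ) else 0)) *
        ((1 - (if ξ < v then (1 : ℝ) else 0)) * f ξ)
        = ω j * (Set.Ico (max (m j) v) (max (u j) v)).indicator f ξ := by
      intro j
      by_cases hxv : ξ < v
      · have : ξ ∉ Set.Ico (max (m j) v) (max (u j) v) := by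
          simp only [Set.mem_Ico, max_le_iff, not_and]
          intro h; linarith [h.2]
        simp [hxv, Set.indicator_of_notMem this]
      · have hvle : v ≤ ξ := le_of_not_gt hxv
        by_cases hcond : m j ≤ ξ ∧ ξ < u j
        · have : ξ ∈ Set.Ico (max (m j) v) (max (u j) v) :=
            ⟨max_le hcond.1 hvle, lt_max_iff.mpr (Or.inl hcond.2)⟩
          simp [hxv, hcond, Set.indicator_of_mem this]
        · have : ξ ∉ Set.Ico (max (m j) v) (max (u j) v) := by
            simp only [Set.mem_Ico, max_le_iff, lt_max_iff, not_and, not_or]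
            intro h1 
            constructor
            · intro h2; exact hcond ⟨h1.1, h2⟩
            · exact hxv
          simp [hxv, hcond, Set.indicator_of_notMem this]
    rw [sub_mul, Finset.sum_mul, one_mul, sub_mul, Finset.sum_mul, hfirst]
    congr 1
    refine Finset.sum_congr rfl fun j _ => ?_
    rw [mul_assoc]
    exact hterm j
  rw [intervalIntegral.integral_congr hEqOn]
  -- integrability facts
  have hind : ∀ s : Set ℝ, MeasurableSet s →
      IntervalIntegrable (s.indicator f) volume a b :=
    fun s hs => ⟨hf_int.1.indicator hs, hf_int.2.indicator hs⟩
  have hint1 : IntervalIntegrable ((Set.Icc v b).indicator f) volume a b :=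
    hind _ measurableSet_Icc
  have hint2 : ∀ j ∈ S, IntervalIntegrable
      (fun ξ => ω j * (Set.Ico (max (m j) v) (max (u j) v)).indicator f ξ) volume a b :=
    fun j _ => (hind _ measurableSet_Ico).const_mul _
  have hintsum : IntervalIntegrable
      (fun ξ => ∑ j ∈ S, ω j * (Set.Ico (max (m j) v) (max (u j) v)).indicator f ξ)
      volume a b := by
    have h := IntervalIntegrable.sum S hint2
    have e : (∑ i ∈ S, fun ξ => ω i * (Set.Ico (max (m i) v) (max (u i) v)).indicator f ξ)
        = (fun ξ => ∑ j ∈ S, ω j * (Set.Ico (max (m j) v) (max (u j) v)).indicator f ξ) := by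
      ext ξ; simp
    rwa [e] at h
  rw [intervalIntegral.integral_sub hint1 hintsum,
    intervalIntegral.integral_finset_sum hint2]
  -- bounds facts
  have hFb : F b = 1 := by rw [hF]; exact hf_one
  -- first integral
  have hI1 : (∫ ξ in a..b, (Set.Icc v b).indicator f ξ) = 1 - F v := by
    rw [aux_indicator_integral f hf_int hab.le hv.1.le hv.2.le le_rfl _
      Set.Ioo_subset_Icc_self subset_rfl, ← hF, ← hF, hFb]
  rw [hI1]
  congr 1
  apply Finset.sum_congr rfl
  intro j hjS
  have hjIcc := (Finset.mem_filter.mp hjS).1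
  have hmu : m j < u j := by
    have := (Finset.mem_filter.mp hjS).2
    simpa using this
  have huj := hu j hjIcc
  have ham : a ≤ m j := by
    rw [hm j]; exact (Finset.le_fold_max _).mpr (Or.inl le_rfl)
  have hmb : m j < b := lt_of_le_of_lt hmu.le huj.2
  rw [intervalIntegral.integral_const_mul]
  rw [aux_indicator_integral f hf_int hab.le (le_trans ham (le_max_left _ _))
    (max_le_max hmu.le le_rfl)
    (max_le huj.2.le hv.2.le) _ Set.Ioo_subset_Ico_self Set.Ico_subset_Icc_self]
  rw [← hF, ← hF]
  -- F(max x v) = F x + F v - F(min x v)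
  have hmaxmin : ∀ x : ℝ, F (max x v) = F x + F v - F (min x v) := by
    intro x
    rcases le_total x v with h | h
    · rw [max_eq_right h, min_eq_left h]; ring
    · rw [max_eq_left h, min_eq_right h]; ring
  rw [hmaxmin, hmaxmin]
  ring
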